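/- Let ≡_θ be the partially commutative congruence on A* generated by relations ab = ba for (a,b) ∈ θ, where θ is a symmetric irreflexive relation on A. Then the unshuffle coproduct c on K⟨A⟩ descends to the quotient: if u ≡_θ u′ and v ≡_θ v′ then c(u) and c(u′) are congruent modulo the ideal generated by {w ⊗ x − w′ ⊗ x′ : w ≡_θ w′, x ≡_θ x′}; equivalently, the shuffle product of two ≡_θ-class sums is a sum of ≡_θ-classes (with multiplicities). -/

import Mathlib

open TensorProduct

/-- The unshuffle coproduct on the monoid algebra of the free monoid (= `K⟨A⟩`):
the unique algebra morphism (for the concatenation product) sending each letter `a`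
to `a ⊗ 1 + 1 ⊗ a`. -/
noncomputable def unshuffle (K A : Type*) [CommSemiring K] :
    MonoidAlgebra K (FreeMonoid A) →ₐ[K]
      MonoidAlgebra K (FreeMonoid A) ⊗[K] MonoidAlgebra K (FreeMonoid A) :=
  MonoidAlgebra.lift K _ (FreeMonoid A)
    (FreeMonoid.lift fun a =>
      (MonoidAlgebra.of K (FreeMonoid A) (FreeMonoid.of a)) ⊗ₜ[K] 1
        + 1 ⊗ₜ[K] (MonoidAlgebra.of K (FreeMonoid A) (FreeMonoid.of a)))

/-- The word `l` viewed as an element of `K⟨A⟩`. -/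
noncomputable def wd {K : Type*} {A : Type*} [CommSemiring K] (l : List A) :
    MonoidAlgebra K (FreeMonoid A) :=
  MonoidAlgebra.of K (FreeMonoid A) (FreeMonoid.ofList l)

/-- `P` is primitive for the unshuffle coproduct: `c(P) = P ⊗ 1 + 1 ⊗ P`. -/
def IsPrimitive {K A : Type*} [CommSemiring K] (P : MonoidAlgebra K (FreeMonoid A)) : Prop :=
  unshuffle K A P = P ⊗ₜ[K] 1 + 1 ⊗ₜ[K] P

/-- The natural algebra morphism `K⟨A⟩ → K[A*/≡]` induced by a monoid congruence. -/
noncomputable def natHom (K : Type*) {A : Type*} [CommSemiring K] (c : Con (FreeMonoid A)) :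
    MonoidAlgebra K (FreeMonoid A) →ₐ[K] MonoidAlgebra K c.Quotient :=
  MonoidAlgebra.mapDomainAlgHom K K c.mk'

/-- for a symmetric irreflexive `θ ⊆ A × A`, the unshuffle coproduct descends
to the quotient by the partially commutative congruence generated by `{ab = ba : (a,b) ∈ θ}`:
if `u ≡_θ v` then `(nat ⊗ nat)(c u) = (nat ⊗ nat)(c v)`. -/
theorem partially_commutative_shuffle_compatible {K A : Type*} [CommSemiring K]
    (θ : A → A → Prop) (hsymm : ∀ a b, θ a b → θ b a) (hirr : ∀ a, ¬ θ a a)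
    (u v : FreeMonoid A)
    (huv : conGen (fun x y : FreeMonoid A => ∃ a b, θ a b ∧
        x = FreeMonoid.of a * FreeMonoid.of b ∧ y = FreeMonoid.of b * FreeMonoid.of a) u v) :
    (Algebra.TensorProduct.map
        (natHom K (conGen (fun x y : FreeMonoid A => ∃ a b, θ a b ∧
          x = FreeMonoid.of a * FreeMonoid.of b ∧ y = FreeMonoid.of b * FreeMonoid.of a)))
        (natHom K (conGen (fun x y : FreeMonoid A => ∃ a b, θ a b ∧
          x = FreeMonoid.of a * FreeMonoid.of b ∧ y = FreeMonoid.of b * FreeMonoid.of a))))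
      (unshuffle K A (MonoidAlgebra.of K (FreeMonoid A) u))
    = (Algebra.TensorProduct.map
        (natHom K (conGen (fun x y : FreeMonoid A => ∃ a b, θ a b ∧
          x = FreeMonoid.of a * FreeMonoid.of b ∧ y = FreeMonoid.of b * FreeMonoid.of a)))
        (natHom K (conGen (fun x y : FreeMonoid A => ∃ a b, θ a b ∧
          x = FreeMonoid.of a * FreeMonoid.of b ∧ y = FreeMonoid.of b * FreeMonoid.of a))))
      (unshuffle K A (MonoidAlgebra.of K (FreeMonoid A) v)) := by
  set r := fun x y : FreeMonoid A => ∃ a b, θ a b ∧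
      x = FreeMonoid.of a * FreeMonoid.of b ∧ y = FreeMonoid.of b * FreeMonoid.of a with hr
  set c := conGen r with hc
  set φ := (Algebra.TensorProduct.map (natHom K c) (natHom K c)).comp (unshuffle K A) with hφ
  change φ (MonoidAlgebra.of K (FreeMonoid A) u) = φ (MonoidAlgebra.of K (FreeMonoid A) v)
  have hnat : ∀ w : FreeMonoid A, natHom K c (MonoidAlgebra.of K (FreeMonoid A) w)
      = MonoidAlgebra.of K c.Quotient (c.mk' w) := by
    intro w
    simp only [natHom, MonoidAlgebra.mapDomainAlgHom, AlgHom.coe_mk, RingHom.coe_mk,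
      MonoidHom.coe_coe, MonoidAlgebra.of_apply, MonoidAlgebra.mapDomainRingHom_apply,
      AddMonoidHom.toFun_eq_coe, Finsupp.mapDomain.addMonoidHom_apply, Finsupp.mapDomain_single,
      MonoidAlgebra.mapDomain_single]
  have hletter : ∀ a : A, φ (MonoidAlgebra.of K (FreeMonoid A) (FreeMonoid.of a))
      = (MonoidAlgebra.of K c.Quotient (c.mk' (FreeMonoid.of a))) ⊗ₜ[K] 1
        + 1 ⊗ₜ[K] (MonoidAlgebra.of K c.Quotient (c.mk' (FreeMonoid.of a))) := by
    intro a
    have h1 : unshuffle K A (MonoidAlgebra.of K (FreeMonoid A) (FreeMonoid.of a))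
        = (MonoidAlgebra.of K (FreeMonoid A) (FreeMonoid.of a)) ⊗ₜ[K] 1
          + 1 ⊗ₜ[K] (MonoidAlgebra.of K (FreeMonoid A) (FreeMonoid.of a)) := by
      simp [unshuffle]
    rw [hφ]
    simp only [AlgHom.coe_comp, Function.comp_apply, h1, map_add,
      Algebra.TensorProduct.map_tmul, map_one, hnat]
  induction huv with
  | of x y h =>
    obtain ⟨a, b, hab, hx, hy⟩ := h
    subst hx hy
    have key : (c.mk' (FreeMonoid.of a) : c.Quotient) * c.mk' (FreeMonoid.of b)
        = c.mk' (FreeMonoid.of b) * c.mk' (FreeMonoid.of a) := by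
      rw [← map_mul, ← map_mul]
      exact (Con.eq c).mpr (ConGen.Rel.of _ _ ⟨a, b, hab, rfl, rfl⟩)
    have hmul : ∀ w x : FreeMonoid A,
        φ (MonoidAlgebra.of K (FreeMonoid A) (w * x))
          = φ (MonoidAlgebra.of K (FreeMonoid A) w) * φ (MonoidAlgebra.of K (FreeMonoid A) x) := by
      intro w x
      rw [map_mul, map_mul]
    rw [hmul, hmul, hletter, hletter]
    set xa := MonoidAlgebra.of K c.Quotient (c.mk' (FreeMonoid.of a)) with hxa
    set xb := MonoidAlgebra.of K c.Quotient (c.mk' (FreeMonoid.of b)) with hxb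
    have keyx : xa * xb = xb * xa := by
      rw [hxa, hxb, ← map_mul, key, map_mul]
    rw [add_mul, add_mul, mul_add, mul_add, mul_add, mul_add]
    simp only [Algebra.TensorProduct.tmul_mul_tmul, one_mul, mul_one]
    rw [keyx]
    abel
  | refl w => rfl
  | symm _ ih => exact ih.symm
  | trans _ _ ih1 ih2 => exact ih1.trans ih2
  | mul h1 h2 ih1 ih2 =>
    rw [map_mul, map_mul, map_mul, map_mul, ih1, ih2]
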